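/- Let (R, m) be a one-dimensional Cohen–Macaulay local ring having minimal multiplicity, with m² = am for a non-zerodivisor a ∈ m, and suppose R is not a discrete valuation ring. Set B = m : m (an R-subalgebra of the total quotient ring). Then the map I ↦ (1/a)I gives a bijection from the set of trace ideals of R other than R itself onto the set of trace ideals of B. -/

import Mathlib

set_option synthInstance.maxHeartbeats 800000
set_option maxHeartbeats 16000000

/-- The trace ideal of an `R`-module `M`. -/
def traceIdeal (R : Type*) [CommRing R] (M : Type*) [AddCommGroup M] [Module R M] : Ideal R :=
  ⨆ f : M →ₗ[R] R, LinearMap.range f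

private lemma mem_traceIdeal_of_apply {S : Type*} [CommRing S] {M : Type*} [AddCommGroup M]
    [Module S M] (f : M →ₗ[S] S) (x : M) : f x ∈ traceIdeal S M :=
  (le_iSup (fun g : M →ₗ[S] S => LinearMap.range g) f) (LinearMap.mem_range_self f x)

private lemma ideal_le_traceIdeal {S : Type*} [CommRing S] (I : Ideal S) :
    I ≤ traceIdeal S ↥I := fun x hx =>
  (le_iSup (fun g : ↥I →ₗ[S] S => LinearMap.range g) (Submodule.subtype I)) ⟨⟨x, hx⟩, rfl⟩

set_option maxHeartbeats 1000000 in
private lemma aux_not_dvr {R : Type*} [CommRing R] [IsNoetherianRing R] [IsLocalRing R]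
    (hnotdvr : ¬∃ _h : IsDomain R, IsDiscreteValuationRing R)
    (r : R) (hrnzd : r ∈ nonZeroDivisors R)
    (hr : IsLocalRing.maximalIdeal R = Ideal.span {r}) : False := by
  have hr0 : r ≠ 0 := by
    rintro rfl
    exact one_ne_zero (mem_nonZeroDivisors_iff_right.mp hrnzd 1 (by rw [one_mul]))
  have hbot : (⨅ n : ℕ, (IsLocalRing.maximalIdeal R) ^ n) = ⊥ :=
    Ideal.iInf_pow_eq_bot_of_isLocalRing _ (Ideal.IsMaximal.ne_top inferInstance)
  have key : ∀ z : R, z ≠ 0 → ∃ (k : ℕ) (c : R), IsUnit c ∧ z = r ^ k * c := by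
    intro z hz
    classical
    have h1 : ∃ n, z ∉ (IsLocalRing.maximalIdeal R) ^ n := by
      by_contra hc
      push_neg at hc
      exact hz (by simpa using (hbot ▸ Submodule.mem_iInf _ |>.2 hc))
    have hn : z ∉ (IsLocalRing.maximalIdeal R) ^ (Nat.find h1) := Nat.find_spec h1
    set n := Nat.find h1 with hndef
    have hn1 : 0 < n := by
      rcases Nat.eq_zero_or_pos n with h0 | h
      · exact absurd (by rw [h0, pow_zero, Ideal.one_eq_top]; exact Submodule.mem_top) hn
      · exact h
    have hzk : z ∈ (IsLocalRing.maximalIdeal R) ^ (n - 1) :=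
      not_not.mp (Nat.find_min h1 (by omega))
    rw [hr, Ideal.span_singleton_pow, Ideal.mem_span_singleton'] at hzk
    obtain ⟨c, hc⟩ := hzk
    refine ⟨n - 1, c, ?_, by rw [← hc, mul_comm]⟩
    by_contra hcu
    have hcm : c ∈ IsLocalRing.maximalIdeal R := hcu
    rw [hr, Ideal.mem_span_singleton'] at hcm
    obtain ⟨d, hd⟩ := hcm
    apply hn
    rw [hr, Ideal.span_singleton_pow, Ideal.mem_span_singleton']
    refine ⟨d, ?_⟩
    have : r ^ n = r ^ (n - 1) * r := by
      conv_lhs => rw [show n = (n - 1) + 1 by omega]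
      rw [pow_succ]
    rw [this, ← hc, ← hd]
    ring
  haveI hnzd : NoZeroDivisors R := by
    constructor
    intro z w hzw
    by_contra hcon
    push_neg at hcon
    obtain ⟨k, c, hcu, rfl⟩ := key z hcon.1
    obtain ⟨l, d, hdu, rfl⟩ := key w hcon.2
    have h0 : (c * d) * r ^ (k + l) = 0 := by rw [← hzw]; ring
    have hcd : c * d = 0 := mem_nonZeroDivisors_iff_right.mp (pow_mem hrnzd (k + l)) _ h0
    exact (hcu.mul hdu).ne_zero hcd
  haveI hdom : IsDomain R := NoZeroDivisors.to_isDomain R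
  have hnf : ¬IsField R := by
    intro hf
    have := IsLocalRing.isField_iff_maximalIdeal_eq.mp hf
    rw [hr] at this
    exact hr0 (by simpa [Ideal.span_eq_bot] using this)
  have h45 := (IsDiscreteValuationRing.TFAE R hnf).out 4 0
  have hdvr : IsDiscreteValuationRing R := h45.mp ⟨⟨r, hr⟩⟩
  exact hnotdvr ⟨hdom, hdvr⟩

/-- The ring `B = m : m ⊆ Q(R)`, the stabilizer of the maximal ideal in the total ring
of fractions. -/
def stabilizerAlgebra (R : Type*) [CommRing R] [IsLocalRing R] :
    Subalgebra R (FractionRing R) where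
  carrier := {α | ∀ x ∈ IsLocalRing.maximalIdeal R, ∃ y ∈ IsLocalRing.maximalIdeal R,
    α * algebraMap R (FractionRing R) x = algebraMap R (FractionRing R) y}
  mul_mem' := by
    intro a b ha hb x hx
    obtain ⟨y, hy, hbe⟩ := hb x hx
    obtain ⟨z, hz, hae⟩ := ha y hy
    exact ⟨z, hz, by rw [mul_assoc, hbe, hae]⟩
  one_mem' := fun x hx => ⟨x, hx, by rw [one_mul]⟩
  add_mem' := by
    intro a b ha hb x hx
    obtain ⟨y, hy, hae⟩ := ha x hx
    obtain ⟨z, hz, hbe⟩ := hb x hx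
    exact ⟨y + z, add_mem hy hz, by rw [add_mul, hae, hbe, map_add]⟩
  zero_mem' := fun x hx => ⟨0, zero_mem _, by rw [zero_mul, map_zero]⟩
  algebraMap_mem' := fun r x hx =>
    ⟨r * x, Ideal.mul_mem_left _ r hx, by rw [map_mul]⟩

/-- Let `(R, m)` be a one-dimensional Cohen–Macaulay local ring of minimal multiplicity,
with `m² = am` for a non-zerodivisor `a ∈ m`, and suppose `R` is not a DVR. With
`B = m : m`, the assignment `I ↦ (1/a)I` is a bijection from the trace ideals of `R`
other than `R` onto the trace ideals of `B`. -/
theorem traceIdeal_bijection_minimal_multiplicity (R : Type*) [CommRing R]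
    [IsNoetherianRing R] [IsLocalRing R]
    (hdim : ringKrullDim R = 1)
    (a : R) (ha : a ∈ IsLocalRing.maximalIdeal R) (hanzd : a ∈ nonZeroDivisors R)
    (hmin : (IsLocalRing.maximalIdeal R) ^ 2 = Ideal.span {a} * IsLocalRing.maximalIdeal R)
    (hnotdvr : ¬∃ _h : IsDomain R, IsDiscreteValuationRing R) :
    Set.BijOn
      (fun I : Ideal R => {α : FractionRing R |
        α * algebraMap R (FractionRing R) a ∈ algebraMap R (FractionRing R) '' (I : Set R)})
      {I : Ideal R | traceIdeal R I = I ∧ I ≠ ⊤}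
      {S : Set (FractionRing R) | ∃ J : Ideal (stabilizerAlgebra R),
        traceIdeal (stabilizerAlgebra R) J = J ∧
        S = Subtype.val '' (J : Set (stabilizerAlgebra R))} := by
  classical
  have inj : Function.Injective (algebraMap R (FractionRing R)) :=
    IsFractionRing.injective R (FractionRing R)
  set φ := algebraMap R (FractionRing R) with hφdef
  set m := IsLocalRing.maximalIdeal R with hmdef
  have ua : IsUnit (φ a) :=
    IsLocalization.map_units (FractionRing R) (⟨a, hanzd⟩ : nonZeroDivisors R)
  have uainv : (↑ua.unit⁻¹ : FractionRing R) * φ a = 1 := ua.val_inv_mul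
  have cancelU : ∀ {u p q : FractionRing R}, IsUnit u → p * u = q * u → p = q := by
    intro u p q hu h
    have h' : u * p = u * q := by rw [mul_comm, h, mul_comm]
    exact hu.mul_left_cancel h'
  have cancelQ : ∀ {p q : FractionRing R}, p * φ a = q * φ a → p = q := fun h => cancelU ua h
  have cancelR : ∀ {t t' : R}, a * t = a * t' → t = t' := fun {t t'} h =>
    (mul_cancel_left_mem_nonZeroDivisors hanzd).mp h
  have hdivmul : ∀ r : R, (↑ua.unit⁻¹ * φ r) * φ a = φ r := fun r => by
    rw [mul_comm (↑ua.unit⁻¹ : FractionRing R) (φ r), mul_assoc, uainv, mul_one]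
  have hdiv : ∀ x ∈ m, ∀ y ∈ m, ∃ z ∈ m, x * y = a * z := by
    intro x hx y hy
    have hxy : x * y ∈ m ^ 2 := by rw [pow_two]; exact Ideal.mul_mem_mul hx hy
    rw [hmin] at hxy
    obtain ⟨z, hz, he⟩ := Ideal.mem_span_singleton_mul.mp hxy
    exact ⟨z, hz, he.symm⟩
  have memB : ∀ {α : FractionRing R}, α ∈ stabilizerAlgebra R ↔
      ∀ x ∈ m, ∃ y ∈ m, α * φ x = φ y := fun {α} => Iff.rfl
  have helem : ∀ x ∈ m, (↑ua.unit⁻¹ : FractionRing R) * φ x ∈ stabilizerAlgebra R := by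
    intro x hx
    refine memB.mpr fun t ht => ?_
    obtain ⟨z, hz, he⟩ := hdiv x hx t ht
    refine ⟨z, hz, ?_⟩
    calc (↑ua.unit⁻¹ : FractionRing R) * φ x * φ t = ↑ua.unit⁻¹ * φ (x * t) := by
          rw [map_mul, mul_assoc]
      _ = ↑ua.unit⁻¹ * (φ a * φ z) := by rw [he, map_mul]
      _ = φ z := by rw [← mul_assoc, uainv, one_mul]
  refine ⟨?_, ?_, ?_⟩
  · -- MapsTo
    rintro I ⟨htr, hne⟩
    have hIm : I ≤ m := IsLocalRing.le_maximalIdeal hne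
    have habs : ∀ x ∈ m, ∀ i ∈ I, ∃ j ∈ I, x * i = a * j := by
      intro x hx i hi
      have hex : ∀ p : ↥I, ∃ t : R, x * ↑p = a * t := fun p => by
        obtain ⟨z, _, he⟩ := hdiv x hx ↑p (hIm p.2)
        exact ⟨z, he⟩
      set u : ↥I → R := fun p => Classical.choose (hex p) with hudef
      have hu : ∀ p : ↥I, x * ↑p = a * u p := fun p => Classical.choose_spec (hex p)
      have hadd : ∀ p q : ↥I, u (p + q) = u p + u q := by
        intro p q
        apply cancelR
        rw [← hu, Submodule.coe_add, mul_add, hu, hu, mul_add]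
      have hsmul : ∀ (c : R) (p : ↥I), u (c • p) = c * u p := by
        intro c p
        apply cancelR
        have hc : (↑(c • p) : R) = c * ↑p := rfl
        rw [← hu, hc, show x * (c * (p : R)) = c * (x * ↑p) from by ring, hu]
        ring
      let f : ↥I →ₗ[R] R :=
        { toFun := u, map_add' := hadd,
          map_smul' := fun c p => by simpa using hsmul c p }
      have hmem : u ⟨i, hi⟩ ∈ I := by
        have := mem_traceIdeal_of_apply f ⟨i, hi⟩
        rwa [htr] at this
      exact ⟨u ⟨i, hi⟩, hmem, hu ⟨i, hi⟩⟩
    have habsB : ∀ β ∈ stabilizerAlgebra R, ∀ i ∈ I, ∃ j ∈ I, β * φ i = φ j := by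
      intro β hβ i hi
      obtain ⟨y, hy, hβa⟩ := memB.mp hβ a ha
      obtain ⟨j, hj, hyi⟩ := habs y hy i hi
      refine ⟨j, hj, cancelQ ?_⟩
      calc β * φ i * φ a = (β * φ a) * φ i := by ring
        _ = φ y * φ i := by rw [hβa]
        _ = φ (a * j) := by rw [← map_mul, ← hyi, map_mul]
        _ = φ j * φ a := by rw [map_mul, mul_comm]
    let J : Ideal ↥(stabilizerAlgebra R) :=
      { carrier := {β : ↥(stabilizerAlgebra R) | (↑β : FractionRing R) * φ a ∈ φ '' I},
        add_mem' := by
          rintro β γ ⟨i, hi, hie⟩ ⟨k, hk, hke⟩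
          refine ⟨i + k, I.add_mem hi hk, ?_⟩
          push_cast [map_add]
          rw [hie, hke]; ring
        zero_mem' := ⟨0, I.zero_mem, by simp⟩
        smul_mem' := by
          rintro γ β ⟨i, hi, hie⟩
          obtain ⟨j, hj, hje⟩ := habsB ↑γ γ.2 i hi
          refine ⟨j, hj, ?_⟩
          rw [smul_eq_mul]
          push_cast
          rw [← hje, hie]; ring }
    have memJ : ∀ {β : ↥(stabilizerAlgebra R)},
        β ∈ J ↔ (↑β : FractionRing R) * φ a ∈ φ '' ↑I := fun {β} => Iff.rfl
    refine ⟨J, ?_, ?_⟩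
    · -- traceIdeal B J = J
      refine le_antisymm ?_ (ideal_le_traceIdeal J)
      apply iSup_le
      intro g
      rintro _ ⟨β, rfl⟩
      have hBel : ∀ p : ↥I, (↑ua.unit⁻¹ * φ ↑p : FractionRing R) ∈ stabilizerAlgebra R :=
        fun p => helem ↑p (hIm p.2)
      have hJel : ∀ p : ↥I,
          (⟨↑ua.unit⁻¹ * φ ↑p, hBel p⟩ : ↥(stabilizerAlgebra R)) ∈ J :=
        fun p => memJ.mpr ⟨↑p, p.2, (hdivmul ↑p).symm⟩
      set βf : ↥I → ↥J := fun p => ⟨⟨↑ua.unit⁻¹ * φ ↑p, hBel p⟩, hJel p⟩ with hβfdef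
      have hβfval : ∀ p : ↥I, ((↑(↑(βf p)) : FractionRing R)) = ↑ua.unit⁻¹ * φ ↑p :=
        fun p => rfl
      have hexr : ∀ p : ↥I, ∃ t : R, φ t = (↑(↑(g (βf p))) : FractionRing R) * φ a := by
        intro p
        obtain ⟨y, _, hye⟩ := memB.mp (g (βf p)).2 a ha
        exact ⟨y, hye.symm⟩
      set u2 : ↥I → R := fun p => Classical.choose (hexr p) with hu2def
      have hu2 : ∀ p : ↥I, φ (u2 p) = (↑(↑(g (βf p))) : FractionRing R) * φ a :=
        fun p => Classical.choose_spec (hexr p)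
      have hβadd : ∀ p q : ↥I, βf (p + q) = βf p + βf q := by
        intro p q
        apply Subtype.ext; apply Subtype.ext
        push_cast
        rw [hβfval, hβfval, hβfval, Submodule.coe_add, map_add]
        ring
      have hβsmul : ∀ (c : R) (p : ↥I),
          βf (c • p) = (algebraMap R ↥(stabilizerAlgebra R) c) • βf p := by
        intro c p
        apply Subtype.ext; apply Subtype.ext
        push_cast
        simp only [smul_eq_mul, MulMemClass.coe_mul, Subalgebra.coe_algebraMap]
        rw [hβfval, hβfval, Submodule.coe_smul, smul_eq_mul, map_mul]
        ring
      have hadd2 : ∀ p q : ↥I, u2 (p + q) = u2 p + u2 q := by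
        intro p q
        apply inj
        rw [map_add, hu2, hu2, hu2, hβadd, map_add]
        push_cast
        ring
      have hsmul2 : ∀ (c : R) (p : ↥I), u2 (c • p) = c * u2 p := by
        intro c p
        apply inj
        rw [map_mul, hu2, hu2, hβsmul, map_smul]
        simp only [smul_eq_mul, MulMemClass.coe_mul, Subalgebra.coe_algebraMap]
        rw [← hφdef]
        ring
      let f : ↥I →ₗ[R] R :=
        { toFun := u2, map_add' := hadd2,
          map_smul' := fun c p => by simpa using hsmul2 c p }
      have hrange : ∀ p : ↥I, u2 p ∈ I := by
        intro p
        have := mem_traceIdeal_of_apply f p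
        rwa [htr] at this
      obtain ⟨i, hi, hie⟩ := memJ.mp β.2
      have hβeq : βf ⟨i, hi⟩ = β := by
        apply Subtype.ext; apply Subtype.ext
        rw [hβfval]
        apply cancelQ
        rw [hdivmul, hie]
      refine memJ.mpr ⟨u2 ⟨i, hi⟩, hrange _, ?_⟩
      rw [hu2, hβeq]
    · -- image equality
      ext α
      constructor
      · rintro ⟨i, hi, hie⟩
        have hα : α = ↑ua.unit⁻¹ * φ i := cancelQ (by rw [hdivmul, hie])
        exact ⟨⟨α, hα ▸ helem i (hIm hi)⟩, memJ.mpr ⟨i, hi, hie⟩, rfl⟩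
      · rintro ⟨β, hβ, rfl⟩
        exact memJ.mp hβ
  · -- InjOn
    rintro I ⟨htrI, hneI⟩ I' ⟨htrI', hneI'⟩ hset
    have key : ∀ K K' : Ideal R,
        {α : FractionRing R | α * φ a ∈ φ '' ↑K} = {α : FractionRing R | α * φ a ∈ φ '' ↑K'} →
          K ≤ K' := by
      intro K K' h r hr
      have h1 : (↑ua.unit⁻¹ * φ r : FractionRing R) ∈ {α : FractionRing R | α * φ a ∈ φ '' ↑K} :=
        ⟨r, hr, (hdivmul r).symm⟩
      rw [h] at h1
      obtain ⟨s, hs, hse⟩ := h1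
      have h2 : s = r := inj (by rw [hse, hdivmul])
      exact h2 ▸ hs
    exact le_antisymm (key _ _ hset) (key _ _ hset.symm)
  · -- SurjOn
    rintro S ⟨J, htrJ, rfl⟩
    let I : Ideal R :=
      { carrier := {r : R | ∃ β : ↥(stabilizerAlgebra R), β ∈ J ∧ φ r = φ a * ↑β},
        add_mem' := by
          rintro r s ⟨β, hβ, he⟩ ⟨γ, hγ, he'⟩
          refine ⟨β + γ, J.add_mem hβ hγ, ?_⟩
          push_cast
          rw [map_add, he, he']
          ring
        zero_mem' := ⟨0, J.zero_mem, by simp⟩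
        smul_mem' := by
          rintro c r ⟨β, hβ, he⟩
          refine ⟨algebraMap R ↥(stabilizerAlgebra R) c * β, Ideal.mul_mem_left J _ hβ, ?_⟩
          rw [smul_eq_mul, map_mul, he]
          simp only [MulMemClass.coe_mul, Subalgebra.coe_algebraMap]
          rw [← hφdef]
          ring }
    have memI : ∀ {r : R}, r ∈ I ↔ ∃ β : ↥(stabilizerAlgebra R), β ∈ J ∧ φ r = φ a * ↑β :=
      fun {r} => Iff.rfl
    have hIm : I ≤ m := by
      rintro r ⟨β, hβ, he⟩
      obtain ⟨y, hy, hba⟩ := memB.mp β.2 a ha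
      have h2 : r = y := inj (by rw [he, mul_comm, hba])
      exact h2 ▸ hy
    refine ⟨I, ⟨?_, ?_⟩, ?_⟩
    · -- traceIdeal R I = I
      have hexr : ∀ β : ↥J, ∃ t : R, t ∈ I ∧ φ t = φ a * ↑↑β := by
        intro β
        obtain ⟨y, hy, hba⟩ := memB.mp (β : ↥(stabilizerAlgebra R)).2 a ha
        exact ⟨y, ⟨↑β, β.2, by rw [← hba, mul_comm]⟩, by rw [← hba, mul_comm]⟩
      let rf : ↥J → ↥I := fun β => ⟨Classical.choose (hexr β), (Classical.choose_spec (hexr β)).1⟩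
      have hrf : ∀ β : ↥J, φ ↑(rf β) = φ a * ↑↑β := fun β => (Classical.choose_spec (hexr β)).2
      have hradd : ∀ β β' : ↥J, rf (β + β') = rf β + rf β' := by
        intro β β'
        apply Subtype.ext; apply inj
        rw [Submodule.coe_add, map_add, hrf, hrf, hrf]
        push_cast
        ring
      have hrsmul : ∀ (γ : ↥(stabilizerAlgebra R)) (β : ↥J),
          φ ↑(rf (γ • β)) = ↑γ * φ ↑(rf β) := by
        intro γ β
        rw [hrf, hrf]
        have h1 : ((↑(γ • β) : ↥(stabilizerAlgebra R)) : FractionRing R) = ↑γ * ↑↑β := by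
          have h2 : (↑(γ • β) : ↥(stabilizerAlgebra R)) = γ * ↑β := by
            rw [Submodule.coe_smul, smul_eq_mul]
          rw [h2]; push_cast; ring
        rw [h1]; ring
      have hsemi : ∀ (f : ↥I →ₗ[R] R) (x r t : R) (hr : r ∈ I) (ht : t ∈ I),
          x * r = a * t → x * f ⟨r, hr⟩ = a * f ⟨t, ht⟩ := by
        intro f x r t hr ht h
        have h1 : x • (⟨r, hr⟩ : ↥I) = a • (⟨t, ht⟩ : ↥I) := Subtype.ext (by simpa using h)
        have h2 := congrArg f h1
        rwa [map_smul, map_smul, smul_eq_mul, smul_eq_mul] at h2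
      have hxdiv : ∀ x ∈ m, ∀ p : ↥I, ∃ s ∈ I, x * ↑p = a * s := by
        intro x hx p
        obtain ⟨β, hβ, he⟩ := memI.mp p.2
        obtain ⟨y, hy, hbx⟩ := memB.mp β.2 x hx
        refine ⟨y, ?_, ?_⟩
        · refine ⟨(⟨↑ua.unit⁻¹ * φ x, helem x hx⟩ : ↥(stabilizerAlgebra R)) * β,
            Ideal.mul_mem_left J _ hβ, ?_⟩
          push_cast
          calc φ y = ↑β * φ x := hbx.symm
            _ = (φ a * ↑ua.unit⁻¹) * (φ x * ↑β) := by
                rw [mul_comm (φ a) (↑ua.unit⁻¹ : FractionRing R), uainv, one_mul, mul_comm]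
            _ = φ a * (↑ua.unit⁻¹ * φ x * ↑β) := by ring
        · apply inj
          rw [map_mul, map_mul, he]
          calc φ x * (φ a * ↑β) = φ a * (↑β * φ x) := by ring
            _ = φ a * φ y := by rw [hbx]
      refine le_antisymm ?_ (ideal_le_traceIdeal I)
      apply iSup_le
      intro f
      rintro _ ⟨i, rfl⟩
      by_cases hcase : ∀ p : ↥I, f p ∈ m
      · -- case 1 : f never hits a unit
        have hgB : ∀ β : ↥J,
            (↑ua.unit⁻¹ * φ (f (rf β)) : FractionRing R) ∈ stabilizerAlgebra R := by
          intro β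
          refine memB.mpr fun x hx => ?_
          obtain ⟨s, hs, hse⟩ := hxdiv x hx (rf β)
          have h2 : x * f (rf β) = a * f ⟨s, hs⟩ := hsemi f x ↑(rf β) s (rf β).2 hs hse
          refine ⟨f ⟨s, hs⟩, hcase _, ?_⟩
          calc (↑ua.unit⁻¹ * φ (f (rf β)) : FractionRing R) * φ x
              = ↑ua.unit⁻¹ * φ (x * f (rf β)) := by rw [map_mul]; ring
            _ = ↑ua.unit⁻¹ * (φ a * φ (f ⟨s, hs⟩)) := by rw [h2, map_mul]
            _ = φ (f ⟨s, hs⟩) := by rw [← mul_assoc, uainv, one_mul]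
        have hkey : ∀ (γ : ↥(stabilizerAlgebra R)) (β : ↥J),
            φ (f (rf (γ • β))) = ↑γ * φ (f (rf β)) := by
          intro γ β
          obtain ⟨y, hy, hga⟩ := memB.mp γ.2 a ha
          have hat : y * ↑(rf β) = a * ↑(rf (γ • β)) := by
            apply inj
            rw [map_mul, map_mul, hrsmul, ← hga]
            ring
          have h2 : y * f (rf β) = a * f (rf (γ • β)) :=
            hsemi f y ↑(rf β) ↑(rf (γ • β)) (rf β).2 (rf (γ • β)).2 hat
          calc φ (f (rf (γ • β)))
              = ↑ua.unit⁻¹ * (φ a * φ (f (rf (γ • β)))) := by rw [← mul_assoc, uainv, one_mul]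
            _ = ↑ua.unit⁻¹ * φ (y * f (rf β)) := by rw [← map_mul, ← h2]
            _ = ↑ua.unit⁻¹ * ((↑γ * φ a) * φ (f (rf β))) := by rw [map_mul, ← hga]
            _ = (↑ua.unit⁻¹ * φ a) * (↑γ * φ (f (rf β))) := by ring
            _ = ↑γ * φ (f (rf β)) := by rw [uainv, one_mul]
        let g : ↥J →ₗ[↥(stabilizerAlgebra R)] ↥(stabilizerAlgebra R) :=
          { toFun := fun β => ⟨↑ua.unit⁻¹ * φ (f (rf β)), hgB β⟩
            map_add' := by
              intro β β'
              apply Subtype.ext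
              push_cast
              rw [hradd, map_add, map_add]
              ring
            map_smul' := by
              intro γ β
              apply Subtype.ext
              simp only [RingHom.id_apply, smul_eq_mul, MulMemClass.coe_mul]
              rw [hkey]
              ring }
        have hgJ : ∀ β : ↥J, g β ∈ J := by
          intro β
          have h4 := mem_traceIdeal_of_apply g β
          rwa [htrJ] at h4
        obtain ⟨β₀, hβ₀, he₀⟩ := memI.mp i.2
        have hiB : (↑ua.unit⁻¹ * φ ↑i : FractionRing R) ∈ stabilizerAlgebra R :=
          helem ↑i (hIm i.2)
        have hBeq : (⟨↑ua.unit⁻¹ * φ ↑i, hiB⟩ : ↥(stabilizerAlgebra R)) = β₀ := by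
          apply Subtype.ext
          show (↑ua.unit⁻¹ * φ ↑i : FractionRing R) = ↑β₀
          rw [he₀, show (↑ua.unit⁻¹ : FractionRing R) * (φ a * ↑β₀) =
            (↑ua.unit⁻¹ * φ a) * ↑β₀ from by ring, uainv, one_mul]
        have hmemJ : (⟨↑ua.unit⁻¹ * φ ↑i, hiB⟩ : ↥(stabilizerAlgebra R)) ∈ J := hBeq ▸ hβ₀
        set βi : ↥J := ⟨⟨↑ua.unit⁻¹ * φ ↑i, hiB⟩, hmemJ⟩ with hβidef
        have hre : rf βi = i := by
          apply Subtype.ext; apply inj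
          rw [hrf]
          show φ a * (↑ua.unit⁻¹ * φ ↑i) = φ ↑i
          rw [show φ a * (↑ua.unit⁻¹ * φ ↑i) = (↑ua.unit⁻¹ * φ a) * φ ↑i from by ring,
            uainv, one_mul]
        refine memI.mpr ⟨g βi, hgJ βi, ?_⟩
        have hv : (↑(g βi) : FractionRing R) = ↑ua.unit⁻¹ * φ (f (rf βi)) := rfl
        rw [hv, hre, show φ a * (↑ua.unit⁻¹ * φ (f i)) = (↑ua.unit⁻¹ * φ a) * φ (f i)
          from by ring, uainv, one_mul]
      · -- case 2 : f hits a unit; contradiction with not-DVR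
        push_neg at hcase
        obtain ⟨j, hjm⟩ := hcase
        have hju : IsUnit (f j) := by
          by_contra hcon
          exact hjm ((IsLocalRing.mem_maximalIdeal _).mpr (mem_nonunits_iff.mpr hcon))
        have hsym : ∀ p q : ↥I, (↑p : R) * f q = ↑q * f p := by
          intro p q
          have h1 : (↑p : R) • q = (↑q : R) • p := Subtype.ext (by simp [mul_comm])
          have h2 := congrArg f h1
          rwa [map_smul, map_smul, smul_eq_mul, smul_eq_mul] at h2
        have hjinv : f j * ↑hju.unit⁻¹ = 1 := by
          rw [mul_comm]; exact hju.val_inv_mul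
        have hspan : ∀ s : ↥I, (↑s : R) = f s * ↑hju.unit⁻¹ * ↑j := by
          intro s
          have h1 := hsym s j
          calc (↑s : R) = ↑s * (f j * ↑hju.unit⁻¹) := by rw [hjinv, mul_one]
            _ = (↑s * f j) * ↑hju.unit⁻¹ := by ring
            _ = (↑j * f s) * ↑hju.unit⁻¹ := by rw [h1]
            _ = f s * ↑hju.unit⁻¹ * ↑j := by ring
        have hjnzd : (↑j : R) ∈ nonZeroDivisors R := by
          refine mem_nonZeroDivisors_iff_right.mpr fun z hz => ?_
          have h1 : z • j = (0 : ↥I) := Subtype.ext (by simpa using hz)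
          have h2 := congrArg f h1
          rw [map_smul, smul_eq_mul, map_zero] at h2
          calc z = z * (f j * ↑hju.unit⁻¹) := by rw [hjinv, mul_one]
            _ = (z * f j) * ↑hju.unit⁻¹ := by ring
            _ = 0 := by rw [h2, zero_mul]
        have uj : IsUnit (φ ↑j) :=
          IsLocalization.map_units (FractionRing R) (⟨↑j, hjnzd⟩ : nonZeroDivisors R)
        set cf : ↥J → R := fun β => f (rf β) * ↑hju.unit⁻¹ with hcfdef
        have hcf : ∀ β : ↥J, cf β * ↑j = ↑(rf β) := fun β => (hspan (rf β)).symm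
        have hcfadd : ∀ β β' : ↥J, cf (β + β') = cf β + cf β' := by
          intro β β'
          rw [hcfdef]
          show f (rf (β + β')) * _ = _
          rw [hradd, map_add]
          ring
        have hcfsmul : ∀ (γ : ↥(stabilizerAlgebra R)) (β : ↥J),
            φ (cf (γ • β)) = ↑γ * φ (cf β) := by
          intro γ β
          apply cancelU uj
          have e1 : cf (γ • β) * ↑j = ↑(rf (γ • β)) := hcf _
          have e2 : cf β * ↑j = ↑(rf β) := hcf _
          calc φ (cf (γ • β)) * φ ↑j = φ (cf (γ • β) * ↑j) := (map_mul φ _ _).symm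
            _ = φ ↑(rf (γ • β)) := by rw [e1]
            _ = ↑γ * φ ↑(rf β) := hrsmul γ β
            _ = ↑γ * (φ (cf β) * φ ↑j) := by rw [← e2, map_mul]
            _ = (↑γ * φ (cf β)) * φ ↑j := by ring
        let g : ↥J →ₗ[↥(stabilizerAlgebra R)] ↥(stabilizerAlgebra R) :=
          { toFun := fun β => ⟨φ (cf β), (stabilizerAlgebra R).algebraMap_mem (cf β)⟩
            map_add' := by
              intro β β'
              apply Subtype.ext
              push_cast
              rw [hcfadd]
              exact map_add φ _ _
            map_smul' := by
              intro γ β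
              apply Subtype.ext
              simp only [RingHom.id_apply, smul_eq_mul, MulMemClass.coe_mul]
              exact hcfsmul γ β }
        have hgJ : ∀ β : ↥J, g β ∈ J := by
          intro β
          have h4 := mem_traceIdeal_of_apply g β
          rwa [htrJ] at h4
        obtain ⟨βj, hβj, hej⟩ := memI.mp j.2
        have hrfj : rf ⟨βj, hβj⟩ = j := by
          apply Subtype.ext; apply inj
          rw [hrf, ← hej]
        have hc1 : cf ⟨βj, hβj⟩ = 1 := by
          have h5 : cf ⟨βj, hβj⟩ * ↑j = 1 * ↑j := by rw [hcf, hrfj, one_mul]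
          exact (mul_cancel_right_mem_nonZeroDivisors hjnzd).mp h5
        have h1J : (1 : ↥(stabilizerAlgebra R)) ∈ J := by
          have h6 := hgJ ⟨βj, hβj⟩
          have h7 : g ⟨βj, hβj⟩ = 1 := by
            apply Subtype.ext
            show φ (cf ⟨βj, hβj⟩) = 1
            rw [hc1, map_one]
          rwa [h7] at h6
        have hJtop : J = ⊤ := (Ideal.eq_top_iff_one J).mpr h1J
        have hmI : m ≤ I := by
          intro x hx
          refine ⟨⟨↑ua.unit⁻¹ * φ x, helem x hx⟩, hJtop ▸ Submodule.mem_top, ?_⟩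
          show φ x = φ a * (↑ua.unit⁻¹ * φ x)
          rw [show φ a * (↑ua.unit⁻¹ * φ x) = (↑ua.unit⁻¹ * φ a) * φ x from by ring,
            uainv, one_mul]
        have hspan2 : m = Ideal.span {(↑j : R)} := by
          apply le_antisymm
          · intro x hx
            rw [Ideal.mem_span_singleton']
            exact ⟨f ⟨x, hmI hx⟩ * ↑hju.unit⁻¹, (hspan ⟨x, hmI hx⟩).symm⟩
          · rw [Ideal.span_le]
            exact Set.singleton_subset_iff.mpr (hIm j.2)
        exact (aux_not_dvr hnotdvr ↑j hjnzd hspan2).elim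
    · -- I ≠ ⊤
      intro htop
      have h1 : (1 : R) ∈ I := by rw [htop]; exact Submodule.mem_top
      obtain ⟨β, hβ, h1e⟩ := memI.mp h1
      have hm2 : m ≤ m • m := by
        intro x hx
        obtain ⟨y, hy, hbx⟩ := memB.mp β.2 x hx
        have hxy : x = a * y := by
          apply inj
          rw [map_mul]
          calc φ x = φ x * φ 1 := by rw [map_one, mul_one]
            _ = φ x * (φ a * ↑β) := by rw [← h1e]
            _ = φ a * (↑β * φ x) := by ring
            _ = φ a * φ y := by rw [hbx]
        rw [Ideal.smul_eq_mul, ← pow_two, hmin]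
        exact Ideal.mem_span_singleton_mul.mpr ⟨y, hy, hxy.symm⟩
      have hjac : m ≤ Ideal.jacobson ⊥ := by
        rw [IsLocalRing.jacobson_eq_maximalIdeal ⊥ bot_ne_top]
      have hbot : m = ⊥ :=
        Submodule.eq_bot_of_le_smul_of_le_jacobson_bot m m (IsNoetherian.noetherian m) hm2 hjac
      have ha0 : a = 0 := by
        have h8 := ha
        rw [hbot] at h8
        simpa using h8
      exact one_ne_zero (mem_nonZeroDivisors_iff_right.mp hanzd 1 (by rw [one_mul, ha0]))
    · -- image equality
      ext α
      constructor
      · rintro ⟨r, hr, hre⟩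
        obtain ⟨β, hβ, he⟩ := memI.mp hr
        have h9 : α = ↑β := cancelQ (by rw [← hre, he, mul_comm])
        exact ⟨β, hβ, h9.symm⟩
      · rintro ⟨β, hβ, rfl⟩
        obtain ⟨y, hy, hba⟩ := memB.mp β.2 a ha
        exact ⟨y, ⟨β, hβ, by rw [← hba, mul_comm]⟩, hba.symm⟩
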